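/- Let N ∈ ℕ₊, α ∈ (0,1), δ ≥ 0, τ > 0, and let x, s, x̃, s̃ ∈ ℝ^N have all components positive. Assume ‖x ⊙ s − τe‖ ≤ ατ, and assume x̃ᵢ/xᵢ ∈ [1/(1+δ), 1+δ] and s̃ᵢ/sᵢ ∈ [1/(1+δ), 1+δ] for every i. Define r = (x̃ ⊙ s̃)^{−1/2} ⊙ (τe − x ⊙ s). Then ‖r‖ ≤ (1+δ)·α·(1−α)^{−1/2}·τ^{1/2}. -/

import Mathlib

/-- bound on `‖r‖` where `r = (x̃ ⊙ s̃)^{−1/2} ⊙ (τe − x ⊙ s)`. -/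
theorem residual_norm_bound (N : ℕ) (hN : 0 < N)
    (α δ τ : ℝ) (hα : α ∈ Set.Ioo (0:ℝ) 1) (hδ : 0 ≤ δ) (hτ : 0 < τ)
    (x s xt st : Fin N → ℝ)
    (hx : ∀ i, 0 < x i) (hs : ∀ i, 0 < s i)
    (hxt : ∀ i, 0 < xt i) (hst : ∀ i, 0 < st i)
    (hcen : Real.sqrt (∑ i, (x i * s i - τ) ^ 2) ≤ α * τ)
    (hratx : ∀ i, xt i / x i ∈ Set.Icc (1 / (1 + δ)) (1 + δ))
    (hrats : ∀ i, st i / s i ∈ Set.Icc (1 / (1 + δ)) (1 + δ))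
    (r : Fin N → ℝ)
    (hr : r = fun i => (Real.sqrt (xt i * st i))⁻¹ * (τ - x i * s i)) :
    Real.sqrt (∑ i, r i ^ 2) ≤ (1 + δ) * α * (Real.sqrt (1 - α))⁻¹ * Real.sqrt τ := by
  obtain ⟨hα0, hα1⟩ := hα
  have hδ1 : (0:ℝ) < 1 + δ := by linarith
  have h1α : (0:ℝ) < 1 - α := by linarith
  have hsum : ∑ i, (x i * s i - τ) ^ 2 ≤ (α * τ) ^ 2 := by
    have h0 : 0 ≤ ∑ i, (x i * s i - τ) ^ 2 :=
      Finset.sum_nonneg fun i _ => sq_nonneg _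
    nlinarith [Real.sq_sqrt h0, Real.sqrt_nonneg (∑ i, (x i * s i - τ) ^ 2)]
  have hterm : ∀ i, (x i * s i - τ) ^ 2 ≤ (α * τ) ^ 2 := by
    intro i
    refine le_trans ?_ hsum
    exact Finset.single_le_sum (f := fun j => (x j * s j - τ)^2)
      (fun j _ => sq_nonneg _) (Finset.mem_univ i)
  have hlow : ∀ i, (1 - α) * τ ≤ x i * s i := by
    intro i
    have := hterm i
    nlinarith [mul_pos hα0 hτ]
  have hxtlow : ∀ i, (1 - α) * τ / (1 + δ) ^ 2 ≤ xt i * st i := by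
    intro i
    have h1 := (hratx i).1
    have h2 := (hrats i).1
    have hxi := hx i; have hsi := hs i
    have hx' : x i / (1 + δ) ≤ xt i := by
      rw [div_le_div_iff₀ hδ1 hxi] at h1
      rw [div_le_iff₀ hδ1]
      linarith [h1]
    have hs' : s i / (1 + δ) ≤ st i := by
      rw [div_le_div_iff₀ hδ1 hsi] at h2
      rw [div_le_iff₀ hδ1]
      linarith [h2]
    have hmul : x i / (1 + δ) * (s i / (1 + δ)) ≤ xt i * st i :=
      mul_le_mul hx' hs' (by positivity) (le_of_lt (hxt i))
    calc (1 - α) * τ / (1 + δ) ^ 2 ≤ x i * s i / (1 + δ) ^ 2 := by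
          apply div_le_div_of_nonneg_right (hlow i); positivity
      _ = x i / (1 + δ) * (s i / (1 + δ)) := by field_simp
      _ ≤ xt i * st i := hmul
  set c : ℝ := (1 + δ) / Real.sqrt ((1 - α) * τ) with hc
  have hcpos : 0 < c := by positivity
  have hinv : ∀ i, (Real.sqrt (xt i * st i))⁻¹ ≤ c := by
    intro i
    have hb : Real.sqrt ((1 - α) * τ / (1 + δ) ^ 2) ≤ Real.sqrt (xt i * st i) :=
      Real.sqrt_le_sqrt (hxtlow i)
    have hbpos : 0 < Real.sqrt ((1 - α) * τ / (1 + δ) ^ 2) := by positivity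
    have h := inv_anti₀ hbpos hb
    refine h.trans_eq ?_
    rw [Real.sqrt_div (by positivity : (0:ℝ) ≤ (1 - α) * τ),
      Real.sqrt_sq (le_of_lt hδ1), inv_div]
  have hsq : ∀ i, r i ^ 2 ≤ c ^ 2 * (x i * s i - τ) ^ 2 := by
    intro i
    have h := hinv i
    have hnn : 0 ≤ (Real.sqrt (xt i * st i))⁻¹ := by positivity
    have : ((Real.sqrt (xt i * st i))⁻¹) ^ 2 ≤ c ^ 2 := by nlinarith
    calc r i ^ 2 = ((Real.sqrt (xt i * st i))⁻¹) ^ 2 * (x i * s i - τ) ^ 2 := by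
          rw [hr]; ring
      _ ≤ c ^ 2 * (x i * s i - τ) ^ 2 := by nlinarith [sq_nonneg (x i * s i - τ)]
  have hsum2 : ∑ i, r i ^ 2 ≤ c ^ 2 * (α * τ) ^ 2 := by
    calc ∑ i, r i ^ 2 ≤ ∑ i, c ^ 2 * (x i * s i - τ) ^ 2 :=
          Finset.sum_le_sum fun i _ => hsq i
      _ = c ^ 2 * ∑ i, (x i * s i - τ) ^ 2 := by rw [Finset.mul_sum]
      _ ≤ c ^ 2 * (α * τ) ^ 2 := by nlinarith [sq_nonneg c]
  have hfin : Real.sqrt (∑ i, r i ^ 2) ≤ c * (α * τ) := by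
    have := Real.sqrt_le_sqrt hsum2
    refine this.trans_eq ?_
    rw [show c ^ 2 * (α * τ) ^ 2 = (c * (α * τ)) ^ 2 by ring,
      Real.sqrt_sq (by positivity)]
  refine hfin.trans_eq ?_
  rw [hc, Real.sqrt_mul (le_of_lt h1α)]
  have h1 : Real.sqrt (1 - α) > 0 := Real.sqrt_pos.mpr h1α
  have h2 : Real.sqrt τ > 0 := Real.sqrt_pos.mpr hτ
  have hτeq : τ = Real.sqrt τ * Real.sqrt τ := (Real.mul_self_sqrt (le_of_lt hτ)).symm
  field_simp
  linear_combination (-1 : ℝ) * Real.sq_sqrt (le_of_lt hτ)
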